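/- If T is a tournament of order n, then dac(T) ≥ √n − 1/2. -/

import Mathlib

/-- The subset `S` of vertices induces an acyclic subdigraph of the digraph with
arc relation `A` (i.e. there is no directed cycle all of whose vertices lie in `S`). -/
def AcyclicSet {V : Type*} (A : V → V → Prop) (S : Set V) : Prop :=
  ∀ v : V, ¬ Relation.TransGen (fun x y => x ∈ S ∧ y ∈ S ∧ A x y) v v

/-- `c` is an acyclic vertex coloring of the digraph `A` with `k` colors:
`c` is surjective and every chromatic class induces an acyclic subdigraph. -/
def IsAcyclicColoring {V : Type*} (A : V → V → Prop) {k : ℕ} (c : V → Fin k) : Prop :=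
  Function.Surjective c ∧ ∀ i : Fin k, AcyclicSet A {v | c v = i}

/-- `c` is a complete vertex coloring of the digraph `A` with `k` colors:
`c` is surjective and for every ordered pair of distinct colors `(i, j)` there is
an arc `(u, v)` with `c u = i` and `c v = j`. -/
def IsCompleteColoring {V : Type*} (A : V → V → Prop) {k : ℕ} (c : V → Fin k) : Prop :=
  Function.Surjective c ∧
    ∀ i j : Fin k, i ≠ j → ∃ u v : V, A u v ∧ c u = i ∧ c v = j

/-- The diachromatic number: the largest `k` admitting a complete acyclic `k`-coloring. -/
noncomputable def dac {V : Type*} (A : V → V → Prop) : ℕ :=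
  sSup {k | ∃ c : V → Fin k, IsAcyclicColoring A c ∧ IsCompleteColoring A c}

/-- The dichromatic number: the smallest `k` admitting an acyclic `k`-coloring. -/
noncomputable def dc {V : Type*} (A : V → V → Prop) : ℕ :=
  sInf {k | ∃ c : V → Fin k, IsAcyclicColoring A c}

/-- The pseudoachromatic number: the largest `k` admitting a complete `k`-coloring. -/
noncomputable def psi {V : Type*} (A : V → V → Prop) : ℕ :=
  sSup {k | ∃ c : V → Fin k, IsCompleteColoring A c}

/-- `A` is a tournament: no loops, and for distinct vertices exactly one of the
two possible arcs is present. -/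
def IsTournament {V : Type*} (A : V → V → Prop) : Prop :=
  (∀ v : V, ¬ A v v) ∧ ∀ u v : V, u ≠ v → (A u v ↔ ¬ A v u)


section Stmt11AuxSection
namespace Stmt11Aux

set_option linter.unusedSectionVars false

variable {V : Type*}

/-- If `A` is transitive and irreflexive on `S`, then `S` is acyclic. -/
lemma acyclicSet_of_trans (A : V → V → Prop) (hirr : ∀ v : V, ¬ A v v) (S : Set V)
    (htr : ∀ a ∈ S, ∀ b ∈ S, ∀ c ∈ S, A a b → A b c → A a c) : AcyclicSet A S := by
  intro v hv
  have key : ∀ x y : V, Relation.TransGen (fun x y => x ∈ S ∧ y ∈ S ∧ A x y) x y →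
      x ∈ S ∧ y ∈ S ∧ A x y := by
    intro x y hxy
    induction hxy with
    | single h => exact h
    | tail _ h ih => exact ⟨ih.1, h.2.1, htr _ ih.1 _ ih.2.1 _ h.2.1 ih.2.2 h.2.2⟩
  exact hirr v (key v v hv).2.2

/-- Union of two acyclic sets with no arcs from `T` to `S` is acyclic. -/
lemma acyclicSet_union (A : V → V → Prop) (S T : Set V) (hS : AcyclicSet A S)
    (hT : AcyclicSet A T) (hdom : ∀ x ∈ S, ∀ y ∈ T, ¬ A y x) :
    AcyclicSet A (S ∪ T) := by
  intro v hv
  set r' := fun x y => x ∈ S ∪ T ∧ y ∈ S ∪ T ∧ A x y with hr'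
  have hstepT : ∀ a b : V, r' a b → a ∈ T → b ∈ T := by
    intro a b hab ha
    rcases hab.2.1 with hbS | hbT
    · exact absurd hab.2.2 (hdom b hbS a ha)
    · exact hbT
  have hstepS : ∀ a b : V, r' a b → b ∈ S → a ∈ S := by
    intro a b hab hb
    rcases hab.1 with haS | haT
    · exact haS
    · exact absurd hab.2.2 (hdom b hb a haT)
  have hTG_T : ∀ x y : V, Relation.TransGen r' x y → x ∈ T →
      Relation.TransGen (fun x y => x ∈ T ∧ y ∈ T ∧ A x y) x y ∧ y ∈ T := by
    intro x y hxy hx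
    induction hxy with
    | single h =>
        exact ⟨Relation.TransGen.single ⟨hx, hstepT _ _ h hx, h.2.2⟩, hstepT _ _ h hx⟩
    | tail _ h ih =>
        exact ⟨Relation.TransGen.tail ih.1 ⟨ih.2, hstepT _ _ h ih.2, h.2.2⟩,
          hstepT _ _ h ih.2⟩
  have hTG_S : ∀ x y : V, Relation.TransGen r' x y → y ∈ S →
      Relation.TransGen (fun x y => x ∈ S ∧ y ∈ S ∧ A x y) x y ∧ x ∈ S := by
    intro x y hxy
    induction hxy using Relation.TransGen.head_induction_on with
    | single h =>
        intro hy
        exact ⟨Relation.TransGen.single ⟨hstepS _ _ h hy, hy, h.2.2⟩, hstepS _ _ h hy⟩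
    | head h _ ih =>
        intro hy
        obtain ⟨htg, hc⟩ := ih hy
        exact ⟨Relation.TransGen.head ⟨hstepS _ _ h hc, hc, h.2.2⟩ htg, hstepS _ _ h hc⟩
  by_cases hvT : v ∈ T
  · exact hT v (hTG_T v v hv hvT).1
  · have hvS : v ∈ S := by
      obtain ⟨c, hc, -⟩ := Relation.TransGen.head'_iff.mp hv
      rcases hc.1 with h | h
      · exact h
      · exact absurd h hvT
    exact hS v (hTG_S v v hv hvS).1


/-- `g` enumerates a transitive chain inside `U`. -/
def IsChainOn (A : V → V → Prop) (U : Finset V) {m : ℕ} (g : Fin m → V) : Prop :=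
  (∀ i, g i ∈ U) ∧ ∀ i j : Fin m, (i : ℕ) < (j : ℕ) → A (g i) (g j)

section Chains

variable {A : V → V → Prop} (hT : IsTournament A) {U : Finset V} {m : ℕ} {g : Fin m → V}

include hT

lemma chain_injective (hg : IsChainOn A U g) : Function.Injective g := by
  intro i j hij
  by_contra hne
  rcases lt_or_gt_of_ne (fun h : (i : ℕ) = (j : ℕ) => hne (Fin.ext h)) with h | h
  · exact hT.1 (g j) (hij ▸ hg.2 i j h)
  · exact hT.1 (g i) (hij ▸ hg.2 j i h)

lemma chain_lt_of_arc (hg : IsChainOn A U g) {i j : Fin m} (h : A (g i) (g j)) :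
    (i : ℕ) < (j : ℕ) := by
  rcases lt_trichotomy (i : ℕ) (j : ℕ) with hlt | heq | hgt
  · exact hlt
  · exact absurd (Fin.ext heq ▸ h) (hT.1 (g i))
  · have hji := hg.2 j i hgt
    have hne : g i ≠ g j := fun hEq => hT.1 (g i) (hEq ▸ h)
    exact absurd hji ((hT.2 (g i) (g j) hne).mp h)

/-- Any subset of the image of a chain is acyclic. -/
lemma acyclic_subset_chain (hg : IsChainOn A U g) (S : Set V)
    (hS : S ⊆ Set.range g) : AcyclicSet A S := by
  apply acyclicSet_of_trans A hT.1
  intro a ha b hb c hc hab hbc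
  obtain ⟨i, rfl⟩ := hS ha
  obtain ⟨j, rfl⟩ := hS hb
  obtain ⟨l, rfl⟩ := hS hc
  exact hg.2 i l (lt_trans (chain_lt_of_arc hT hg hab) (chain_lt_of_arc hT hg hbc))

/-- A vertex of `U` outside a length-maximal chain has arcs to and from the chain. -/
lemma mixed_of_maxchain (hg : IsChainOn A U g)
    (hmax : ∀ g' : Fin (m + 1) → V, ¬ IsChainOn A U g')
    {v : V} (hvU : v ∈ U) (hv : ∀ i, v ≠ g i) :
    (∃ i, A v (g i)) ∧ ∃ j, A (g j) v := by
  constructor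
  · by_contra hno
    push_neg at hno
    have hall : ∀ i, A (g i) v := fun i => (hT.2 (g i) v (fun h => hv i h.symm)).mpr (hno i)
    -- append v at the bottom of the chain
    refine hmax (fun i => if h : (i : ℕ) < m then g ⟨i, h⟩ else v) ⟨?_, ?_⟩
    · intro i
      by_cases h : (i : ℕ) < m <;> simp [h, hg.1, hvU]
    · intro i j hij
      by_cases hjm : (j : ℕ) < m
      · have him : (i : ℕ) < m := lt_trans hij hjm
        simpa [him, hjm] using hg.2 ⟨i, him⟩ ⟨j, hjm⟩ hij
      · have him : (i : ℕ) < m := by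
          have : (j : ℕ) < m + 1 := j.isLt
          omega
        simpa [him, hjm] using hall ⟨i, him⟩
  · by_contra hno
    push_neg at hno
    have hall : ∀ i, A v (g i) := fun i => (hT.2 v (g i) (hv i)).mpr (hno i)
    -- prepend v at the top of the chain
    refine hmax (fun i => if h : 0 < (i : ℕ) then g ⟨(i : ℕ) - 1, by omega⟩ else v) ⟨?_, ?_⟩
    · intro i
      by_cases h : 0 < (i : ℕ) <;> simp [h, hg.1, hvU]
    · intro i j hij
      have hj : 0 < (j : ℕ) := by omega
      by_cases hi : 0 < (i : ℕ)
      · have : (i : ℕ) - 1 < (j : ℕ) - 1 := by omega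
        simpa [hi, hj] using hg.2 ⟨(i : ℕ) - 1, by omega⟩ ⟨(j : ℕ) - 1, by omega⟩ this
      · simpa [hi, hj] using hall ⟨(j : ℕ) - 1, by omega⟩

end Chains


/-- A good partition of `U`: nonempty classes covering `U`, pairwise disjoint,
each acyclic, and each ordered pair of distinct classes joined by an arc. -/
def GoodOn (A : V → V → Prop) (U : Finset V) (P : Finset (Finset V)) : Prop :=
  (∀ C ∈ P, C.Nonempty) ∧
  (∀ C ∈ P, C ⊆ U) ∧
  (∀ v ∈ U, ∃ C ∈ P, v ∈ C) ∧
  (∀ C ∈ P, ∀ D ∈ P, C ≠ D → ∀ v, v ∈ C → v ∉ D) ∧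
  (∀ C ∈ P, AcyclicSet A (C : Set V)) ∧
  (∀ C ∈ P, ∀ D ∈ P, C ≠ D → ∃ u ∈ C, ∃ w ∈ D, A u w)

lemma exists_coloring [Fintype V] (A : V → V → Prop) (P : Finset (Finset V))
    (h : GoodOn A Finset.univ P) :
    ∃ c : V → Fin P.card, IsAcyclicColoring A c ∧ IsCompleteColoring A c := by
  classical
  obtain ⟨hne, -, hcov, hdisj, hacy, hcomp⟩ := h
  have hex : ∀ v : V, ∃ C ∈ P, v ∈ C := fun v => hcov v (Finset.mem_univ v)
  let cls : V → {x // x ∈ P} := fun v => ⟨(hex v).choose, (hex v).choose_spec.1⟩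
  have hclsmem : ∀ v : V, v ∈ (cls v).1 := fun v => (hex v).choose_spec.2
  have huniq : ∀ (v : V) (C : Finset V) (hC : C ∈ P), v ∈ C → cls v = ⟨C, hC⟩ := by
    intro v C hC hvC
    by_contra hne'
    have : (cls v).1 ≠ C := fun hEq => hne' (Subtype.ext hEq)
    exact hdisj _ (cls v).2 C hC this v (hclsmem v) hvC
  let e := P.equivFin
  refine ⟨fun v => e (cls v), ?_, ?_⟩
  · constructor
    · intro i
      obtain ⟨v, hv⟩ := hne _ (e.symm i).2
      refine ⟨v, ?_⟩
      have hcv : cls v = e.symm i := by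
        rw [huniq v _ (e.symm i).2 hv]
      show e (cls v) = i
      rw [hcv, Equiv.apply_symm_apply]
    · intro i
      have hset : {v | e (cls v) = i} = ((e.symm i).1 : Set V) := by
        ext v
        constructor
        · intro hv
          have : cls v = e.symm i := by
            have := congrArg e.symm hv
            rwa [Equiv.symm_apply_apply] at this
          simp only [Finset.coe_sort_coe, Set.mem_setOf_eq] at *
          rw [← this]
          exact hclsmem v
        · intro hv
          have : cls v = e.symm i := huniq v _ (e.symm i).2 hv
          simp only [Set.mem_setOf_eq, this, Equiv.apply_symm_apply]
      rw [hset]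
      exact hacy _ (e.symm i).2
  · constructor
    · intro i
      obtain ⟨v, hv⟩ := hne _ (e.symm i).2
      refine ⟨v, ?_⟩
      have hcv : cls v = e.symm i := huniq v _ (e.symm i).2 hv
      show e (cls v) = i
      rw [hcv, Equiv.apply_symm_apply]
    · intro i j hij
      have hCD : (e.symm i).1 ≠ (e.symm j).1 := by
        intro hEq
        exact hij (by
          have : e.symm i = e.symm j := Subtype.ext hEq
          have := congrArg e this
          rwa [Equiv.apply_symm_apply, Equiv.apply_symm_apply] at this)
      obtain ⟨u, hu, w, hw, huw⟩ := hcomp _ (e.symm i).2 _ (e.symm j).2 hCD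
      refine ⟨u, w, huw, ?_, ?_⟩
      · show e (cls u) = i
        rw [huniq u _ (e.symm i).2 hu, Equiv.apply_symm_apply]
      · show e (cls w) = j
        rw [huniq w _ (e.symm j).2 hw, Equiv.apply_symm_apply]

lemma le_dac [Fintype V] (A : V → V → Prop) (k : ℕ)
    (h : ∃ c : V → Fin k, IsAcyclicColoring A c ∧ IsCompleteColoring A c) :
    k ≤ dac A := by
  apply le_csSup
  · refine ⟨Fintype.card V, ?_⟩
    rintro j ⟨c, hc, -⟩
    have := Fintype.card_le_of_surjective c hc.1
    simpa using this
  · exact h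


section WithDecEq
variable [DecidableEq V]

/-- Both directions of arcs exist between `X` and `E`. -/
def DoublyLinked (A : V → V → Prop) (X E : Finset V) : Prop :=
  (∃ u ∈ X, ∃ w ∈ E, A u w) ∧ (∃ u ∈ E, ∃ w ∈ X, A u w)

lemma not_doublyLinked {A : V → V → Prop} {X E : Finset V}
    (h : ¬ DoublyLinked A X E) :
    (∀ x ∈ X, ∀ y ∈ E, ¬ A y x) ∨ (∀ x ∈ E, ∀ y ∈ X, ¬ A y x) := by
  rw [DoublyLinked, not_and_or] at h
  rcases h with h | h
  · push_neg at h
    right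
    intro x hx y hy
    exact h y hy x hx
  · push_neg at h
    left
    intro x hx y hy
    exact h y hy x hx

lemma caseA (A : V → V → Prop) (hT : IsTournament A) (U : Finset V) (K : ℕ)
    (g : Fin (2 * K + 1) → V) (hg : IsChainOn A U g)
    (PF : Finset (Finset V))
    (hPF : GoodOn A (U \ Finset.image g Finset.univ) PF) :
    ∃ P : Finset (Finset V), GoodOn A U P ∧ K + 1 ≤ P.card := by
  classical
  set W : Finset V := Finset.image g Finset.univ with hW
  obtain ⟨hne, hsub, hcov, hdisj, hacy, hcomp⟩ := hPF
  have ginj : Function.Injective g := chain_injective hT hg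
  have hmemW : ∀ v : V, v ∈ W ↔ ∃ l, g l = v := by
    intro v; simp [hW, Finset.mem_image]
  have hWU : W ⊆ U := by
    intro v hv; obtain ⟨l, rfl⟩ := (hmemW v).mp hv; exact hg.1 l
  have hEdisjW : ∀ E ∈ PF, ∀ v, v ∈ E → v ∉ W :=
    fun E hE v hv => (Finset.mem_sdiff.mp (hsub E hE hv)).2
  have hEsubU : ∀ E ∈ PF, E ⊆ U :=
    fun E hE v hv => (Finset.mem_sdiff.mp (hsub E hE hv)).1
  -- index embeddings
  have lt1 : ∀ i : Fin (K + 1), (i : ℕ) < 2 * K + 1 := fun i => by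
    have := i.isLt; omega
  have lt2 : ∀ i : Fin (K + 1), 2 * K - (i : ℕ) < 2 * K + 1 := fun i => by
    have := i.isLt; omega
  set n1 : Fin (K + 1) → Fin (2 * K + 1) := fun i => ⟨(i : ℕ), lt1 i⟩ with hn1
  set n2 : Fin (K + 1) → Fin (2 * K + 1) := fun i => ⟨2 * K - (i : ℕ), lt2 i⟩ with hn2
  have hn1v : ∀ i, ((n1 i : Fin (2 * K + 1)) : ℕ) = (i : ℕ) := fun i => rfl
  have hn2v : ∀ i, ((n2 i : Fin (2 * K + 1)) : ℕ) = 2 * K - (i : ℕ) := fun i => rfl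
  -- the crossing classes
  set Q : Fin (K + 1) → Finset V := fun i => {g (n1 i), g (n2 i)} with hQ
  have hQmem1 : ∀ i, g (n1 i) ∈ Q i := by intro i; simp [hQ]
  have hQmem2 : ∀ i, g (n2 i) ∈ Q i := by intro i; simp [hQ]
  have hQmem : ∀ (i : Fin (K + 1)) (v : V), v ∈ Q i ↔ v = g (n1 i) ∨ v = g (n2 i) := by
    intro i v; simp [hQ]
  have hQsubW : ∀ i, (Q i : Finset V) ⊆ W := by
    intro i v hv
    rcases (hQmem i v).mp hv with rfl | rfl
    · exact (hmemW _).mpr ⟨_, rfl⟩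
    · exact (hmemW _).mpr ⟨_, rfl⟩
  have hQne : ∀ i, (Q i).Nonempty := fun i => ⟨_, hQmem1 i⟩
  have hival : ∀ i : Fin (K + 1), (i : ℕ) ≤ K := fun i => by have := i.isLt; omega
  -- arcs between distinct crossing classes (each ordered direction)
  have hQarc : ∀ i j : Fin (K + 1), i ≠ j → ∃ u ∈ Q i, ∃ w ∈ Q j, A u w := by
    intro i j hij
    have hij' : (i : ℕ) ≠ (j : ℕ) := fun h => hij (Fin.ext h)
    rcases lt_or_gt_of_ne hij' with h | h
    · refine ⟨_, hQmem1 i, _, hQmem1 j, hg.2 (n1 i) (n1 j) ?_⟩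
      rw [hn1v, hn1v]; exact h
    · refine ⟨_, hQmem1 i, _, hQmem2 j, hg.2 (n1 i) (n2 j) ?_⟩
      rw [hn1v, hn2v]
      have hi := hival i
      have hj := hival j
      omega
  -- injectivity and disjointness of the crossing classes
  have hQinj : Function.Injective Q := by
    intro i j hQij
    have h1 : g (n1 i) ∈ Q j := hQij ▸ hQmem1 i
    have hi := hival i
    have hj := hival j
    rcases (hQmem j _).mp h1 with h | h
    · have hv : (i : ℕ) = (j : ℕ) := congrArg (Fin.val : Fin (2 * K + 1) → ℕ) (ginj h)
      exact Fin.ext hv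
    · have hv : (i : ℕ) = 2 * K - (j : ℕ) := congrArg (Fin.val : Fin (2 * K + 1) → ℕ) (ginj h)
      exact Fin.ext (by omega)
  have hQdisj : ∀ i j : Fin (K + 1), i ≠ j → ∀ v, v ∈ Q i → v ∉ Q j := by
    intro i j hij v hvi hvj
    have hi := hival i
    have hj := hival j
    apply hij
    rcases (hQmem i v).mp hvi with rfl | rfl <;>
      rcases (hQmem j _).mp hvj with h | h
    · have hv : (i : ℕ) = (j : ℕ) := congrArg (Fin.val : Fin (2 * K + 1) → ℕ) (ginj h)
      exact Fin.ext hv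
    · have hv : (i : ℕ) = 2 * K - (j : ℕ) := congrArg (Fin.val : Fin (2 * K + 1) → ℕ) (ginj h)
      exact Fin.ext (by omega)
    · have hv : 2 * K - (i : ℕ) = (j : ℕ) := congrArg (Fin.val : Fin (2 * K + 1) → ℕ) (ginj h)
      exact Fin.ext (by omega)
    · have hv : 2 * K - (i : ℕ) = 2 * K - (j : ℕ) := congrArg (Fin.val : Fin (2 * K + 1) → ℕ) (ginj h)
      exact Fin.ext (by omega)
  -- the collection of crossing classes
  set Wside : Finset (Finset V) := Finset.image Q Finset.univ with hWside
  have hWsideMem : ∀ X : Finset V, X ∈ Wside ↔ ∃ i, Q i = X := by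
    intro X; simp [hWside, Finset.mem_image]
  have hWsideCard : Wside.card = K + 1 := by
    rw [hWside, Finset.card_image_of_injective _ hQinj, Finset.card_univ, Fintype.card_fin]
  have hXsubW : ∀ X ∈ Wside, X ⊆ W := by
    intro X hX
    obtain ⟨i, rfl⟩ := (hWsideMem X).mp hX
    exact hQsubW i
  have hXne : ∀ X ∈ Wside, X.Nonempty := by
    intro X hX
    obtain ⟨i, rfl⟩ := (hWsideMem X).mp hX
    exact hQne i
  -- matchings between crossing classes and recursive classes along non-linked pairs
  set Match : Finset (Finset V × Finset V) → Prop := fun M =>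
    M ⊆ Wside ×ˢ PF ∧ (∀ p ∈ M, ¬ DoublyLinked A p.1 p.2) ∧
      (∀ p ∈ M, ∀ q ∈ M, p.1 = q.1 → p = q) ∧
      (∀ p ∈ M, ∀ q ∈ M, p.2 = q.2 → p = q) with hMatch
  have hM0 : Match ∅ := by
    refine ⟨Finset.empty_subset _, ?_, ?_, ?_⟩ <;> simp
  obtain ⟨M, hM, hMmax⟩ :=
    Finset.exists_max_image ((Wside ×ˢ PF).powerset.filter Match) Finset.card
      ⟨∅, Finset.mem_filter.mpr ⟨Finset.mem_powerset.mpr (Finset.empty_subset _), hM0⟩⟩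
  obtain ⟨-, hMsub, hMbad, hMinj1, hMinj2⟩ :
      M ∈ (Wside ×ˢ PF).powerset ∧ M ⊆ Wside ×ˢ PF ∧ _ ∧ _ ∧ _ := by
    have := Finset.mem_filter.mp hM
    exact ⟨this.1, this.2.1, this.2.2.1, this.2.2.2.1, this.2.2.2.2⟩
  have hMfst : ∀ X E : Finset V, (X, E) ∈ M → X ∈ Wside ∧ E ∈ PF := by
    intro X E hXE
    have := hMsub hXE
    rw [Finset.mem_product] at this
    exact this
  -- maximality: unmatched pairs are doubly linked
  have hMaximal : ∀ X ∈ Wside, ∀ E ∈ PF, (∀ E', (X, E') ∉ M) → (∀ X', (X', E) ∉ M) →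
      DoublyLinked A X E := by
    intro X hX E hE hXun hEun
    by_contra hbad
    have hnotmem : (X, E) ∉ M := hXun E
    have hM' : Match (insert (X, E) M) := by
      refine ⟨?_, ?_, ?_, ?_⟩
      · refine Finset.insert_subset ?_ hMsub
        rw [Finset.mem_product]; exact ⟨hX, hE⟩
      · intro p hp
        rcases Finset.mem_insert.mp hp with rfl | hp
        · exact hbad
        · exact hMbad p hp
      · rintro ⟨p1, p2⟩ hp ⟨q1, q2⟩ hq hpq
        simp only at hpq
        rcases Finset.mem_insert.mp hp with hp' | hp' <;>
          rcases Finset.mem_insert.mp hq with hq' | hq'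
        · rw [hp', hq']
        · exfalso
          have : p1 = X := (Prod.mk.injEq .. ▸ hp' : _ ∧ _).1
          subst hpq
          exact hXun q2 (by rwa [this] at hq')
        · exfalso
          have : q1 = X := (Prod.mk.injEq .. ▸ hq' : _ ∧ _).1
          rw [← hpq] at this
          exact hXun p2 (by rwa [this] at hp')
        · exact hMinj1 _ hp' _ hq' hpq
      · rintro ⟨p1, p2⟩ hp ⟨q1, q2⟩ hq hpq
        simp only at hpq
        rcases Finset.mem_insert.mp hp with hp' | hp' <;>
          rcases Finset.mem_insert.mp hq with hq' | hq'
        · rw [hp', hq']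
        · exfalso
          have : p2 = E := (Prod.mk.injEq .. ▸ hp' : _ ∧ _).2
          subst hpq
          exact hEun q1 (by rwa [this] at hq')
        · exfalso
          have : q2 = E := (Prod.mk.injEq .. ▸ hq' : _ ∧ _).2
          rw [← hpq] at this
          exact hEun p1 (by rwa [this] at hp')
        · exact hMinj2 _ hp' _ hq' hpq
    have hmem' : insert (X, E) M ∈ (Wside ×ˢ PF).powerset.filter Match :=
      Finset.mem_filter.mpr ⟨Finset.mem_powerset.mpr hM'.1, hM'⟩
    have := hMmax _ hmem'
    rw [Finset.card_insert_of_notMem hnotmem] at this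
    omega
  -- the partner of a crossing class
  set partner : Finset V → Finset V := fun X => (PF.filter fun E => (X, E) ∈ M).sup id
    with hpartner
  have hpartner_matched : ∀ X E : Finset V, (X, E) ∈ M → partner X = E := by
    intro X E hXE
    have hfil : (PF.filter fun E' => (X, E') ∈ M) = {E} := by
      apply Finset.eq_singleton_iff_unique_mem.mpr
      constructor
      · exact Finset.mem_filter.mpr ⟨(hMfst X E hXE).2, hXE⟩
      · intro E' hE'
        have hE'M := (Finset.mem_filter.mp hE').2
        have := hMinj1 _ hE'M _ hXE rfl
        exact (Prod.mk.injEq .. ▸ this : _ ∧ _).2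
    rw [hpartner]
    simp only
    rw [hfil, Finset.sup_singleton, id]
  have hpartner_unmatched : ∀ X : Finset V, (∀ E, (X, E) ∉ M) → partner X = ∅ := by
    intro X hXun
    have hfil : (PF.filter fun E' => (X, E') ∈ M) = ∅ := by
      apply Finset.filter_false_of_mem
      intro E' _
      exact hXun E'
    rw [hpartner]
    simp only
    rw [hfil, Finset.sup_empty]
    rfl
  have hpartner_cases : ∀ X : Finset V,
      (partner X = ∅ ∧ ∀ E, (X, E) ∉ M) ∨ ∃ E ∈ PF, (X, E) ∈ M ∧ partner X = E := by
    intro X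
    by_cases h : ∃ E, (X, E) ∈ M
    · obtain ⟨E, hE⟩ := h
      exact Or.inr ⟨E, (hMfst X E hE).2, hE, hpartner_matched X E hE⟩
    · push_neg at h
      exact Or.inl ⟨hpartner_unmatched X h, h⟩
  -- the final partition
  set merged : Finset V → Finset V := fun X => X ∪ partner X with hmerged
  set P : Finset (Finset V) :=
    Wside.image merged ∪ PF.filter (fun E => ∀ X ∈ Wside, (X, E) ∉ M) with hP
  have hpartner_sub : ∀ X : Finset V, partner X ⊆ U \ W := by
    intro X
    rcases hpartner_cases X with ⟨h0, -⟩ | ⟨E, hE, -, hpe⟩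
    · rw [h0]; exact Finset.empty_subset _
    · rw [hpe]; exact hsub E hE
  have hmerged_interW : ∀ X ∈ Wside, ∀ v, v ∈ merged X → v ∈ W → v ∈ X := by
    intro X hX v hv hvW
    rcases Finset.mem_union.mp hv with h | h
    · exact h
    · exact absurd hvW (Finset.mem_sdiff.mp (hpartner_sub X h)).2
  have hmerged_inj : Set.InjOn merged ↑Wside := by
    intro X hX X' hX' hEq
    have hX := Finset.mem_coe.mp hX
    have hX' := Finset.mem_coe.mp hX'
    apply Finset.Subset.antisymm
    · intro v hv
      have hvW : v ∈ W := hXsubW X hX hv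
      have hv' : v ∈ merged X' := hEq ▸ Finset.mem_union_left _ hv
      exact hmerged_interW X' hX' v hv' hvW
    · intro v hv
      have hvW : v ∈ W := hXsubW X' hX' hv
      have hv' : v ∈ merged X := hEq.symm ▸ Finset.mem_union_left _ hv
      exact hmerged_interW X hX v hv' hvW
  have hcardP : K + 1 ≤ P.card := by
    have h1 : (Wside.image merged).card = K + 1 := by
      rw [Finset.card_image_of_injOn hmerged_inj, hWsideCard]
    calc K + 1 = (Wside.image merged).card := h1.symm
      _ ≤ P.card := Finset.card_le_card Finset.subset_union_left
  have hPmem : ∀ C ∈ P, (∃ X ∈ Wside, merged X = C) ∨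
      (C ∈ PF ∧ ∀ X ∈ Wside, (X, C) ∉ M) := by
    intro C hC
    rcases Finset.mem_union.mp hC with h | h
    · obtain ⟨X, hX, rfl⟩ := Finset.mem_image.mp h
      exact Or.inl ⟨X, hX, rfl⟩
    · have h' := Finset.mem_filter.mp h
      exact Or.inr ⟨h'.1, h'.2⟩
  -- the unmatched side of the maximality statement, adapted
  have hMaximal' : ∀ X ∈ Wside, ∀ E ∈ PF, (∀ E', (X, E') ∉ M) →
      (∀ X' ∈ Wside, (X', E) ∉ M) → DoublyLinked A X E := by
    intro X hX E hE h1 h2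
    refine hMaximal X hX E hE h1 ?_
    intro X' hX'
    exact h2 X' (hMfst X' E hX').1 hX'
  refine ⟨P, ⟨?_, ?_, ?_, ?_, ?_, ?_⟩, hcardP⟩
  · -- nonempty
    intro C hC
    rcases hPmem C hC with ⟨X, hX, rfl⟩ | ⟨hC', -⟩
    · obtain ⟨v, hv⟩ := hXne X hX
      exact ⟨v, Finset.mem_union_left _ hv⟩
    · exact hne C hC'
  · -- subset of U
    intro C hC
    rcases hPmem C hC with ⟨X, hX, rfl⟩ | ⟨hC', -⟩
    · intro v hv
      rcases Finset.mem_union.mp hv with h | h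
      · exact hWU (hXsubW X hX h)
      · exact (Finset.mem_sdiff.mp (hpartner_sub X h)).1
    · exact hEsubU C hC'
  · -- cover
    intro v hv
    by_cases hvW : v ∈ W
    · obtain ⟨l, rfl⟩ := (hmemW v).mp hvW
      have hlK := l.isLt
      by_cases hl : (l : ℕ) ≤ K
      · set i : Fin (K + 1) := ⟨(l : ℕ), by omega⟩ with hi
        have hQl : g l ∈ Q i := by
          have : n1 i = l := Fin.ext rfl
          rw [← this]
          exact hQmem1 i
        refine ⟨merged (Q i), ?_, Finset.mem_union_left _ hQl⟩
        apply Finset.mem_union_left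
        exact Finset.mem_image.mpr ⟨Q i, (hWsideMem _).mpr ⟨i, rfl⟩, rfl⟩
      · set i : Fin (K + 1) := ⟨2 * K - (l : ℕ), by omega⟩ with hi
        have hQl : g l ∈ Q i := by
          have : n2 i = l := Fin.ext (by
            show 2 * K - (2 * K - (l : ℕ)) = (l : ℕ)
            omega)
          rw [← this]
          exact hQmem2 i
        refine ⟨merged (Q i), ?_, Finset.mem_union_left _ hQl⟩
        apply Finset.mem_union_left
        exact Finset.mem_image.mpr ⟨Q i, (hWsideMem _).mpr ⟨i, rfl⟩, rfl⟩
    · obtain ⟨E, hE, hvE⟩ := hcov v (Finset.mem_sdiff.mpr ⟨hv, hvW⟩)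
      by_cases hEm : ∃ X, (X, E) ∈ M
      · obtain ⟨X, hXE⟩ := hEm
        have hX : X ∈ Wside := (hMfst X E hXE).1
        have hpe : partner X = E := hpartner_matched X E hXE
        refine ⟨merged X, ?_, ?_⟩
        · apply Finset.mem_union_left
          exact Finset.mem_image.mpr ⟨X, hX, rfl⟩
        · apply Finset.mem_union_right
          rw [hpe]
          exact hvE
      · push_neg at hEm
        refine ⟨E, ?_, hvE⟩
        apply Finset.mem_union_right
        exact Finset.mem_filter.mpr ⟨hE, fun X _ => hEm X⟩
  · -- pairwise disjoint
    intro C hC D hD hCD v hvC hvD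
    rcases hPmem C hC with ⟨X, hX, rfl⟩ | ⟨hC', hCun⟩ <;>
      rcases hPmem D hD with ⟨X', hX', rfl⟩ | ⟨hD', hDun⟩
    · -- merged vs merged
      have hXX' : X ≠ X' := by
        intro h; exact hCD (by rw [h])
      rcases Finset.mem_union.mp hvC with h1 | h1 <;> rcases Finset.mem_union.mp hvD with h2 | h2
      · obtain ⟨i, rfl⟩ := (hWsideMem X).mp hX
        obtain ⟨j, rfl⟩ := (hWsideMem X').mp hX'
        have hij : i ≠ j := fun h => hXX' (by rw [h])
        exact hQdisj i j hij v h1 h2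
      · exact (Finset.mem_sdiff.mp (hpartner_sub X' h2)).2 (hXsubW X hX h1)
      · exact (Finset.mem_sdiff.mp (hpartner_sub X h1)).2 (hXsubW X' hX' h2)
      · rcases hpartner_cases X with ⟨h0, -⟩ | ⟨E, hE, hXE, hpe⟩
        · rw [h0] at h1; exact absurd h1 (Finset.notMem_empty v)
        · rcases hpartner_cases X' with ⟨h0', -⟩ | ⟨E', hE', hXE', hpe'⟩
          · rw [h0'] at h2; exact absurd h2 (Finset.notMem_empty v)
          · by_cases hEE' : E = E'
            · subst hEE'
              have := hMinj2 _ hXE _ hXE' rfl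
              have hXeq : X = X' := (Prod.mk.injEq .. ▸ this : _ ∧ _).1
              exact hXX' hXeq
            · rw [hpe] at h1
              rw [hpe'] at h2
              exact hdisj E hE E' hE' hEE' v h1 h2
    · -- merged vs unmatched
      rcases Finset.mem_union.mp hvC with h1 | h1
      · exact hEdisjW D hD' v hvD (hXsubW X hX h1)
      · rcases hpartner_cases X with ⟨h0, -⟩ | ⟨E, hE, hXE, hpe⟩
        · rw [h0] at h1; exact absurd h1 (Finset.notMem_empty v)
        · have hED : E ≠ D := by
            intro h; exact hDun X hX (h ▸ hXE)
          rw [hpe] at h1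
          exact hdisj E hE D hD' hED v h1 hvD
    · -- unmatched vs merged
      rcases Finset.mem_union.mp hvD with h2 | h2
      · exact hEdisjW C hC' v hvC (hXsubW X' hX' h2)
      · rcases hpartner_cases X' with ⟨h0, -⟩ | ⟨E', hE', hXE', hpe'⟩
        · rw [h0] at h2; exact absurd h2 (Finset.notMem_empty v)
        · have hEC : C ≠ E' := by
            intro h; exact hCun X' hX' (h ▸ hXE')
          rw [hpe'] at h2
          exact hdisj C hC' E' hE' hEC v hvC h2
    · exact hdisj C hC' D hD' hCD v hvC hvD
  · -- acyclic
    intro C hC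
    rcases hPmem C hC with ⟨X, hX, rfl⟩ | ⟨hC', -⟩
    · have hXacy : AcyclicSet A (X : Set V) := by
        apply acyclic_subset_chain hT hg
        intro v hv
        have : v ∈ W := hXsubW X hX (Finset.mem_coe.mp hv)
        obtain ⟨l, rfl⟩ := (hmemW v).mp this
        exact ⟨l, rfl⟩
      rcases hpartner_cases X with ⟨h0, -⟩ | ⟨E, hE, hXE, hpe⟩
      · have : merged X = X := by
          show X ∪ partner X = X
          rw [h0, Finset.union_empty]
        rw [this]
        exact hXacy
      · have hbad : ¬ DoublyLinked A X E := hMbad _ hXE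
        have hcoe : ((merged X : Finset V) : Set V) = (X : Set V) ∪ (E : Set V) := by
          show ((X ∪ partner X : Finset V) : Set V) = _
          rw [hpe, Finset.coe_union]
        rcases not_doublyLinked hbad with hdom | hdom
        · rw [hcoe]
          refine acyclicSet_union A _ _ hXacy (hacy E hE) ?_
          intro x hx y hy
          exact hdom x (Finset.mem_coe.mp hx) y (Finset.mem_coe.mp hy)
        · rw [hcoe, Set.union_comm]
          refine acyclicSet_union A _ _ (hacy E hE) hXacy ?_
          intro x hx y hy
          exact hdom x (Finset.mem_coe.mp hx) y (Finset.mem_coe.mp hy)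
    · exact hacy C hC'
  · -- complete
    intro C hC D hD hCD
    rcases hPmem C hC with ⟨X, hX, rfl⟩ | ⟨hC', hCun⟩ <;>
      rcases hPmem D hD with ⟨X', hX', rfl⟩ | ⟨hD', hDun⟩
    · have hXX' : X ≠ X' := by
        intro h; exact hCD (by rw [h])
      obtain ⟨i, rfl⟩ := (hWsideMem X).mp hX
      obtain ⟨j, rfl⟩ := (hWsideMem X').mp hX'
      have hij : i ≠ j := fun h => hXX' (by rw [h])
      obtain ⟨u, hu, w, hw, huw⟩ := hQarc i j hij
      exact ⟨u, Finset.mem_union_left _ hu, w, Finset.mem_union_left _ hw, huw⟩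
    · -- merged vs unmatched
      rcases hpartner_cases X with ⟨h0, hXun⟩ | ⟨E, hE, hXE, hpe⟩
      · have hdl := hMaximal' X hX D hD' hXun hDun
        obtain ⟨u, hu, w, hw, huw⟩ := hdl.1
        exact ⟨u, Finset.mem_union_left _ hu, w, hw, huw⟩
      · have hED : E ≠ D := fun h => hDun X hX (h ▸ hXE)
        obtain ⟨u, hu, w, hw, huw⟩ := hcomp E hE D hD' hED
        refine ⟨u, ?_, w, hw, huw⟩
        apply Finset.mem_union_right
        rw [hpe]
        exact hu
    · -- unmatched vs merged
      rcases hpartner_cases X' with ⟨h0, hXun⟩ | ⟨E', hE', hXE', hpe'⟩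
      · have hdl := hMaximal' X' hX' C hC' hXun hCun
        obtain ⟨u, hu, w, hw, huw⟩ := hdl.2
        exact ⟨u, hu, w, Finset.mem_union_left _ hw, huw⟩
      · have hEC : C ≠ E' := fun h => hCun X' hX' (h ▸ hXE')
        obtain ⟨u, hu, w, hw, huw⟩ := hcomp C hC' E' hE' hEC
        refine ⟨u, hu, w, ?_, huw⟩
        apply Finset.mem_union_right
        rw [hpe']
        exact hw
    · exact hcomp C hC' D hD' hCD


lemma caseB (A : V → V → Prop) (hT : IsTournament A) (U : Finset V) {t : ℕ} (ht : 0 < t)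
    (g : Fin t → V) (hg : IsChainOn A U g)
    (hmax : ∀ g' : Fin (t + 1) → V, ¬ IsChainOn A U g')
    (PF : Finset (Finset V))
    (hPF : GoodOn A (U \ Finset.image g Finset.univ) PF) :
    GoodOn A U (insert (Finset.image g Finset.univ) PF) ∧
      (insert (Finset.image g Finset.univ) PF).card = PF.card + 1 := by
  set W : Finset V := Finset.image g Finset.univ with hW
  obtain ⟨hne, hsub, hcov, hdisj, hacy, hcomp⟩ := hPF
  have hWU : W ⊆ U := by
    intro v hv
    obtain ⟨i, -, rfl⟩ := Finset.mem_image.mp hv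
    exact hg.1 i
  have hWne : W.Nonempty := ⟨g ⟨0, ht⟩, Finset.mem_image.mpr ⟨⟨0, ht⟩, Finset.mem_univ _, rfl⟩⟩
  have hWnotPF : W ∉ PF := by
    intro hWin
    obtain ⟨v, hv⟩ := hWne
    have := hsub W hWin hv
    rw [Finset.mem_sdiff] at this
    exact this.2 hv
  have hmemW : ∀ v : V, v ∈ W ↔ ∃ i, g i = v := by
    intro v
    simp [hW, Finset.mem_image]
  -- mixedness of vertices outside W
  have hmixed : ∀ v ∈ U, v ∉ W → (∃ i, A v (g i)) ∧ ∃ j, A (g j) v := by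
    intro v hvU hvW
    refine mixed_of_maxchain hT hg hmax hvU ?_
    intro i hvi
    exact hvW ((hmemW v).mpr ⟨i, hvi.symm⟩)
  constructor
  · refine ⟨?_, ?_, ?_, ?_, ?_, ?_⟩
    · intro C hC
      rcases Finset.mem_insert.mp hC with rfl | hC
      · exact hWne
      · exact hne C hC
    · intro C hC
      rcases Finset.mem_insert.mp hC with rfl | hC
      · exact hWU
      · exact fun v hv => (Finset.mem_sdiff.mp (hsub C hC hv)).1
    · intro v hv
      by_cases hvW : v ∈ W
      · exact ⟨W, Finset.mem_insert_self _ _, hvW⟩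
      · obtain ⟨C, hC, hvC⟩ := hcov v (Finset.mem_sdiff.mpr ⟨hv, hvW⟩)
        exact ⟨C, Finset.mem_insert_of_mem hC, hvC⟩
    · intro C hC D hD hCD v hvC hvD
      rcases Finset.mem_insert.mp hC with rfl | hC <;>
        rcases Finset.mem_insert.mp hD with rfl | hD
      · exact hCD rfl
      · exact (Finset.mem_sdiff.mp (hsub D hD hvD)).2 hvC
      · exact (Finset.mem_sdiff.mp (hsub C hC hvC)).2 hvD
      · exact hdisj C hC D hD hCD v hvC hvD
    · intro C hC
      rcases Finset.mem_insert.mp hC with rfl | hC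
      · refine acyclic_subset_chain hT hg _ ?_
        intro v hv
        obtain ⟨i, hi⟩ := (hmemW v).mp hv
        exact ⟨i, hi⟩
      · exact hacy C hC
    · intro C hC D hD hCD
      rcases Finset.mem_insert.mp hC with rfl | hC <;>
        rcases Finset.mem_insert.mp hD with rfl | hD
      · exact absurd rfl hCD
      · -- arc from W into D
        obtain ⟨v, hv⟩ := hne D hD
        have hvU : v ∈ U := (Finset.mem_sdiff.mp (hsub D hD hv)).1
        have hvW : v ∉ W := (Finset.mem_sdiff.mp (hsub D hD hv)).2
        obtain ⟨-, j, hj⟩ := hmixed v hvU hvW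
        exact ⟨g j, (hmemW _).mpr ⟨j, rfl⟩, v, hv, hj⟩
      · -- arc from C into W
        obtain ⟨v, hv⟩ := hne C hC
        have hvU : v ∈ U := (Finset.mem_sdiff.mp (hsub C hC hv)).1
        have hvW : v ∉ W := (Finset.mem_sdiff.mp (hsub C hC hv)).2
        obtain ⟨⟨i, hi⟩, -⟩ := hmixed v hvU hvW
        exact ⟨v, hv, g i, (hmemW _).mpr ⟨i, rfl⟩, hi⟩
      · exact hcomp C hC D hD hCD
  · exact Finset.card_insert_of_notMem hWnotPF


/-- Main construction: every tournament on a finite vertex set `U` with `n` vertices has a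
complete acyclic partition into `c` classes with `n ≤ c (c+1)`. -/
lemma main [DecidableEq V] (A : V → V → Prop) (hT : IsTournament A) :
    ∀ (n : ℕ) (U : Finset V), U.card = n →
      ∃ P : Finset (Finset V), GoodOn A U P ∧ n ≤ P.card * (P.card + 1) := by
  intro n
  induction n using Nat.strong_induction_on with
  | _ n IH =>
    intro U hU
    rcases Nat.eq_zero_or_pos n with rfl | hn
    · -- empty case
      have hUe : U = ∅ := Finset.card_eq_zero.mp hU
      refine ⟨∅, ⟨?_, ?_, ?_, ?_, ?_, ?_⟩, Nat.zero_le _⟩ <;>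
        simp [hUe]
    · -- find the least k with n ≤ k (k+1)
      have hk : ∃ k : ℕ, n ≤ k * (k + 1) := ⟨n, Nat.le_mul_of_pos_right n (by omega)⟩
      have hkpos : 0 < Nat.find hk := by
        rcases Nat.eq_zero_or_pos (Nat.find hk) with h0 | h
        · exfalso
          have := Nat.find_spec hk
          rw [h0] at this
          omega
        · exact h
      obtain ⟨K, hkeq⟩ : ∃ K, Nat.find hk = K + 1 := ⟨Nat.find hk - 1, by omega⟩
      have hkspec : n ≤ (K + 1) * (K + 2) := by
        have := Nat.find_spec hk
        rw [hkeq] at this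
        exact this
      have hlow : K * (K + 1) < n := by
        by_contra hcon
        push_neg at hcon
        exact Nat.find_min hk (by omega : K < Nat.find hk) hcon
      -- maximum chain length t
      set L : Set ℕ := {m | ∃ g : Fin m → V, IsChainOn A U g} with hL
      have h0L : 0 ∈ L := ⟨fun i => i.elim0, fun i => i.elim0, fun i => i.elim0⟩
      have hbdd : BddAbove L := by
        refine ⟨U.card, ?_⟩
        rintro m ⟨g, hg⟩
        have h := Finset.card_le_card_of_injOn (s := (Finset.univ : Finset (Fin m)))
          (t := U) g (fun a _ => hg.1 a) (fun a _ b _ h => chain_injective hT hg h)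
        simpa using h
      set t := sSup L with htdef
      have htL : t ∈ L := Nat.sSup_mem ⟨0, h0L⟩ hbdd
      have htmax : t + 1 ∉ L := by
        intro h
        have := le_csSup hbdd h
        omega
      have ht1 : 1 ≤ t := by
        have hUne : U.Nonempty := Finset.card_pos.mp (by omega)
        obtain ⟨v, hv⟩ := hUne
        have h1L : 1 ∈ L := ⟨fun _ => v, fun _ => hv, fun i j hij => by omega⟩
        exact le_csSup hbdd h1L
      obtain ⟨g, hg⟩ := htL
      by_cases hcase : 2 * K + 1 ≤ t
      · -- Case A: a chain of length 2K+1 exists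
        set g' : Fin (2 * K + 1) → V := fun i => g ⟨(i : ℕ), by have := i.isLt; omega⟩
          with hg'def
        have hg' : IsChainOn A U g' := by
          constructor
          · intro i; exact hg.1 _
          · intro i j hij; exact hg.2 _ _ hij
        set W : Finset V := Finset.image g' Finset.univ with hWdef
        have hWU : W ⊆ U := by
          intro v hv
          obtain ⟨i, -, rfl⟩ := Finset.mem_image.mp hv
          exact hg'.1 i
        have hcard' : (U \ W).card < n := by
          have hsub : U \ W ⊆ U := Finset.sdiff_subset
          have hg0W : g' ⟨0, by omega⟩ ∈ W :=
            Finset.mem_image.mpr ⟨_, Finset.mem_univ _, rfl⟩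
          have hg0U : g' ⟨0, by omega⟩ ∈ U := hg'.1 _
          have hnotin : g' ⟨0, by omega⟩ ∉ U \ W := fun h => (Finset.mem_sdiff.mp h).2 hg0W
          have hss : U \ W ⊂ U :=
            (Finset.ssubset_iff_of_subset hsub).mpr ⟨_, hg0U, hnotin⟩
          calc (U \ W).card < U.card := Finset.card_lt_card hss
            _ = n := hU
        obtain ⟨PF, hPF, -⟩ := IH _ hcard' (U \ W) rfl
        obtain ⟨P, hP, hPcard⟩ := caseA A hT U K g' hg' PF hPF
        refine ⟨P, hP, ?_⟩
        calc n ≤ (K + 1) * (K + 2) := hkspec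
          _ ≤ P.card * (P.card + 1) := Nat.mul_le_mul hPcard (by omega)
      · -- Case B: all chains have length ≤ 2K, peel a maximum one
        push_neg at hcase
        have hmax : ∀ g'' : Fin (t + 1) → V, ¬ IsChainOn A U g'' := by
          intro g'' hg''
          exact htmax ⟨g'', hg''⟩
        set W : Finset V := Finset.image g Finset.univ with hWdef
        have hWU : W ⊆ U := by
          intro v hv
          obtain ⟨i, -, rfl⟩ := Finset.mem_image.mp hv
          exact hg.1 i
        have hWcard : W.card = t := by
          rw [hWdef, Finset.card_image_of_injective _ (chain_injective hT hg),
            Finset.card_univ, Fintype.card_fin]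
        have hcard' : (U \ W).card = n - t := by
          rw [Finset.card_sdiff_of_subset hWU, hU, hWcard]
        have htn : t ≤ n := by
          rw [← hU, ← hWcard]
          exact Finset.card_le_card hWU
        have hcardlt : (U \ W).card < n := by omega
        obtain ⟨PF, hPF, hPFcard⟩ := IH _ hcardlt (U \ W) rfl
        obtain ⟨hgood, hcardeq⟩ := caseB A hT U (by omega : 0 < t) g hg hmax PF hPF
        refine ⟨insert W PF, hgood, ?_⟩
        rw [hcardeq]
        set e := PF.card with hedef
        -- show e ≥ K
        have heK : K ≤ e := by
          by_contra hcon
          push_neg at hcon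
          have h1 : n - t ≤ e * (e + 1) := hcard' ▸ hPFcard
          rcases Nat.eq_zero_or_pos K with rfl | hKpos
          · omega
          · have h2 : e * (e + 1) ≤ (K - 1) * K := Nat.mul_le_mul (by omega) (by omega)
            have h3 : (K - 1) * K + K = K * K := by
              obtain ⟨m, rfl⟩ : ∃ m, K = m + 1 := ⟨K - 1, by omega⟩
              simp only [Nat.add_sub_cancel]
              ring
            have h4 : K * (K + 1) = K * K + K := by ring
            omega
        calc n ≤ (K + 1) * (K + 2) := hkspec
          _ ≤ (e + 1) * (e + 1 + 1) := Nat.mul_le_mul (by omega) (by omega)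

end WithDecEq
end Stmt11Aux
end Stmt11AuxSection

/-- If `T` is a tournament of order `n`, then `dac(T) ≥ √n - 1/2`. -/
theorem stmt11 {V : Type*} [Fintype V] (A : V → V → Prop)
    (hT : IsTournament A) :
    Real.sqrt (Fintype.card V) - 1 / 2 ≤ (dac A : ℝ) := by

  classical
  obtain ⟨P, hP, hcard⟩ :=
    Stmt11Aux.main A hT (Fintype.card V) Finset.univ (Finset.card_univ)
  obtain ⟨c, hc1, hc2⟩ := Stmt11Aux.exists_coloring A P hP
  have hfeas : P.card ≤ dac A := Stmt11Aux.le_dac A P.card ⟨c, hc1, hc2⟩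
  have hnle : (Fintype.card V : ℕ) ≤ dac A * (dac A + 1) :=
    le_trans hcard (Nat.mul_le_mul hfeas (by omega))
  have hnleR : (Fintype.card V : ℝ) ≤ (dac A : ℝ) * ((dac A : ℝ) + 1) := by
    have := Nat.cast_le (α := ℝ) |>.mpr hnle
    push_cast at this
    linarith
  have hsqrt : Real.sqrt (Fintype.card V) ≤ (dac A : ℝ) + 1 / 2 := by
    have h1 : ((dac A : ℝ) + 1 / 2) = Real.sqrt (((dac A : ℝ) + 1 / 2) ^ 2) := by
      rw [Real.sqrt_sq (by positivity)]
    rw [h1]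
    apply Real.sqrt_le_sqrt
    nlinarith [hnleR]
  linarith
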